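/- arXiv:1211.6898 — 3 statements merged into one kernel-verified Lean document; each statement's English description precedes it below -/
import Mathlib

section
/- Main AVI non-stationary bound: for all k and m with 1 ≤ m ≤ k, ‖v_* − v_{π_{k,m}}‖_∞ ≤ (2/(1 − γ^m)) · ( (γ − γ^k)/(1 − γ) · ε + γ^k ‖v_* − v_0‖_∞ ). -/
open Finset Filter

variable {S A : Type*} [Fintype S] [Nonempty S] [DecidableEq S] [Fintype A] [Nonempty A]

/-- `P s a s'` is the probability of moving to `s'` when taking action `a` in state `s`. -/
def IsStochastic (P : S → A → S → ℝ) : Prop :=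
  (∀ s a s', 0 ≤ P s a s') ∧ ∀ s a, ∑ s', P s a s' = 1

/-- Bellman operator `T_π` of a stationary deterministic policy `π`. -/
noncomputable def Tpol (P : S → A → S → ℝ) (r : S → A → ℝ) (γ : ℝ)
    (π : S → A) (v : S → ℝ) : S → ℝ :=
  fun s => r s (π s) + γ * ∑ s', P s (π s) s' * v s'

/-- Bellman optimality operator `T`. -/
noncomputable def Topt (P : S → A → S → ℝ) (r : S → A → ℝ) (γ : ℝ) (v : S → ℝ) : S → ℝ :=
  fun s => univ.sup' univ_nonempty (fun a => r s a + γ * ∑ s', P s a s' * v s')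

/-- Application of the transition matrix `P_π` to a value function. -/
noncomputable def Pap (P : S → A → S → ℝ) (π : S → A) (v : S → ℝ) : S → ℝ :=
  fun s => ∑ s', P s (π s) s' * v s'

/-- `Tcomp P r γ πs k m = T_{π_k} T_{π_{k-1}} ⋯ T_{π_{k-m+1}}`. -/
noncomputable def Tcomp (P : S → A → S → ℝ) (r : S → A → ℝ) (γ : ℝ)
    (πs : ℕ → S → A) : ℕ → ℕ → (S → ℝ) → (S → ℝ)
  | _, 0, v => v
  | k, m+1, v => Tpol P r γ (πs k) (Tcomp P r γ πs (k-1) m v)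

/-- `Gap P γ πs k m = (γP_{π_k})(γP_{π_{k-1}})⋯(γP_{π_{k-m+1}})` applied to a value function. -/
noncomputable def Gap (P : S → A → S → ℝ) (γ : ℝ)
    (πs : ℕ → S → A) : ℕ → ℕ → (S → ℝ) → (S → ℝ)
  | _, 0, v => v
  | k, m+1, v => γ • Pap P (πs k) (Gap P γ πs (k-1) m v)


section AuxLemmas
variable {S A : Type*} [Fintype S] [Nonempty S] [DecidableEq S] [Fintype A] [Nonempty A]

omit [Nonempty S] [DecidableEq S] [Fintype A] [Nonempty A] in
lemma row_abs_le (P : S → A → S → ℝ) (hP : IsStochastic P) (s : S) (a : A) (f : S → ℝ) :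
    |∑ s', P s a s' * f s'| ≤ ‖f‖ := by
  calc |∑ s', P s a s' * f s'| ≤ ∑ s', |P s a s' * f s'| := Finset.abs_sum_le_sum_abs _ _
    _ ≤ ∑ s', P s a s' * ‖f‖ := by
        refine Finset.sum_le_sum fun s' _ => ?_
        rw [abs_mul, abs_of_nonneg (hP.1 s a s')]
        exact mul_le_mul_of_nonneg_left (norm_le_pi_norm f s') (hP.1 s a s')
    _ = ‖f‖ := by rw [← Finset.sum_mul, hP.2 s a, one_mul]

omit [Nonempty S] [DecidableEq S] [Fintype A] [Nonempty A] in
lemma tpol_contract (P : S → A → S → ℝ) (r : S → A → ℝ) (γ : ℝ)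
    (hP : IsStochastic P) (hγ : 0 ≤ γ) (π : S → A) (v w : S → ℝ) :
    ‖Tpol P r γ π v - Tpol P r γ π w‖ ≤ γ * ‖v - w‖ := by
  rw [pi_norm_le_iff_of_nonneg (by positivity)]
  intro s
  have e : (Tpol P r γ π v - Tpol P r γ π w) s = γ * ∑ s', P s (π s) s' * (v - w) s' := by
    simp [Tpol, mul_sub, Finset.sum_sub_distrib]
  rw [Real.norm_eq_abs, e, abs_mul, abs_of_nonneg hγ]
  exact mul_le_mul_of_nonneg_left (row_abs_le P hP s (π s) (v - w)) hγ

omit [Nonempty S] [DecidableEq S] in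
lemma topt_contract (P : S → A → S → ℝ) (r : S → A → ℝ) (γ : ℝ)
    (hP : IsStochastic P) (hγ : 0 ≤ γ) (v w : S → ℝ) :
    ‖Topt P r γ v - Topt P r γ w‖ ≤ γ * ‖v - w‖ := by
  rw [pi_norm_le_iff_of_nonneg (by positivity)]
  intro s
  rw [Real.norm_eq_abs, Pi.sub_apply, abs_sub_le_iff]
  have key : ∀ x y : S → ℝ, Topt P r γ x s - Topt P r γ y s ≤ γ * ‖x - y‖ := by
    intro x y
    rw [sub_le_iff_le_add, Topt]
    refine Finset.sup'_le _ _ fun a _ => ?_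
    have h1 : r s a + γ * ∑ s', P s a s' * y s' ≤ Topt P r γ y s :=
      Finset.le_sup' (f := fun a => r s a + γ * ∑ s', P s a s' * y s') (Finset.mem_univ a)
    have h2 : γ * ∑ s', P s a s' * x s' - γ * ∑ s', P s a s' * y s' ≤ γ * ‖x - y‖ := by
      have e : γ * ∑ s', P s a s' * x s' - γ * ∑ s', P s a s' * y s'
          = γ * ∑ s', P s a s' * (x - y) s' := by
        simp [mul_sub, Finset.sum_sub_distrib]
      rw [e]
      exact mul_le_mul_of_nonneg_left ((abs_le.mp (row_abs_le P hP s a (x - y))).2) hγ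
    linarith [h2]
  constructor
  · exact key v w
  · rw [norm_sub_rev]; exact key w v

omit [Nonempty S] [DecidableEq S] [Fintype A] [Nonempty A] in
lemma tcomp_contract (P : S → A → S → ℝ) (r : S → A → ℝ) (γ : ℝ)
    (hP : IsStochastic P) (hγ : 0 ≤ γ) (πs : ℕ → S → A) :
    ∀ (m k : ℕ) (v w : S → ℝ),
      ‖Tcomp P r γ πs k m v - Tcomp P r γ πs k m w‖ ≤ γ ^ m * ‖v - w‖ := by
  intro m
  induction m with
  | zero => intro k v w; simp [Tcomp]
  | succ m ih =>
    intro k v w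
    calc ‖Tcomp P r γ πs k (m+1) v - Tcomp P r γ πs k (m+1) w‖
        ≤ γ * ‖Tcomp P r γ πs (k-1) m v - Tcomp P r γ πs (k-1) m w‖ :=
          tpol_contract P r γ hP hγ _ _ _
      _ ≤ γ * (γ ^ m * ‖v - w‖) := mul_le_mul_of_nonneg_left (ih (k-1) v w) hγ
      _ = γ ^ (m+1) * ‖v - w‖ := by ring

omit [Nonempty S] [DecidableEq S] [Fintype A] [Nonempty A] in
lemma tcomp_peel (P : S → A → S → ℝ) (r : S → A → ℝ) (γ : ℝ) (πs : ℕ → S → A) :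
    ∀ (m k : ℕ) (x : S → ℝ),
      Tcomp P r γ πs k (m+1) x = Tcomp P r γ πs k m (Tpol P r γ (πs (k - m)) x) := by
  intro m
  induction m with
  | zero => intro k x; simp [Tcomp]
  | succ m ih =>
    intro k x
    show Tpol P r γ (πs k) (Tcomp P r γ πs (k-1) (m+1) x) = _
    rw [ih (k-1) x]
    have e : k - 1 - m = k - (m + 1) := by omega
    rw [e]
    rfl

end AuxLemmas

/-- Main AVI non-stationary bound:
`‖v_* − v_{π_{k,m}}‖ ≤ (2/(1 − γ^m)) ((γ − γ^k)/(1 − γ) ε + γ^k ‖v_* − v_0‖)`. -/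
theorem avi_nonstationary_bound (P : S → A → S → ℝ) (r : S → A → ℝ) (γ : ℝ)
    (hP : IsStochastic P) (hγ0 : 0 < γ) (hγ1 : γ < 1)
    (v : ℕ → S → ℝ) (εf : ℕ → S → ℝ) (ε : ℝ) (hε : 0 ≤ ε) (πs : ℕ → S → A)
    (hAVI : ∀ k : ℕ, v (k+1) = Topt P r γ (v k) + εf (k+1))
    (herr : ∀ k : ℕ, 1 ≤ k → ‖εf k‖ ≤ ε)
    (hgreedy : ∀ i : ℕ, Tpol P r γ (πs (i+1)) (v i) = Topt P r γ (v i))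
    (vstar : S → ℝ) (hstar : Topt P r γ vstar = vstar)
    (k m : ℕ) (hm : 1 ≤ m) (hk : m ≤ k)
    (vkm : S → ℝ) (hfix : Tcomp P r γ πs k m vkm = vkm) :
    ‖vstar - vkm‖ ≤ 2 / (1 - γ ^ m) * ((γ - γ ^ k) / (1 - γ) * ε + γ ^ k * ‖vstar - v 0‖) := by
  have hγ := hγ0.le
  have h1γ : (0:ℝ) < 1 - γ := by linarith
  have hγm1 : γ ^ m < 1 := pow_lt_one₀ hγ hγ1 (by omega)
  have hγm0 : (0:ℝ) ≤ γ ^ m := by positivity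
  have hk1 : 1 ≤ k := le_trans hm hk
  set D0 := ‖vstar - v 0‖ with hD0
  -- error propagation bound
  have hD : ∀ j : ℕ, ‖vstar - v j‖ ≤ γ ^ j * D0 + (∑ i ∈ range j, γ ^ i) * ε := by
    intro j
    induction j with
    | zero => simp [hD0]
    | succ j ih =>
      have e : vstar - v (j+1) = (Topt P r γ vstar - Topt P r γ (v j)) - εf (j+1) := by
        rw [hstar, hAVI j]; abel
      calc ‖vstar - v (j+1)‖ ≤ ‖Topt P r γ vstar - Topt P r γ (v j)‖ + ‖εf (j+1)‖ := by
            rw [e]; exact norm_sub_le _ _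
        _ ≤ γ * ‖vstar - v j‖ + ε :=
            add_le_add (topt_contract P r γ hP hγ _ _) (herr (j+1) (by omega))
        _ ≤ γ * (γ ^ j * D0 + (∑ i ∈ range j, γ ^ i) * ε) + ε := by
            have := mul_le_mul_of_nonneg_left ih hγ; linarith
        _ = γ ^ (j+1) * D0 + (∑ i ∈ range (j+1), γ ^ i) * ε := by
            rw [geom_sum_succ]; ring
  -- chain bound
  have hC : ∀ t : ℕ, 1 ≤ t → t ≤ k →
      ‖vstar - Tcomp P r γ πs k t (v (k - t))‖
        ≤ γ * ‖vstar - v (k-1)‖ + (∑ j ∈ Finset.Ico 1 t, γ ^ j) * ε := by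
    intro t
    induction t with
    | zero => intro h; omega
    | succ t ih =>
      intro _ htk
      rcases Nat.eq_zero_or_pos t with ht0 | ht1
      · subst ht0
        have e1 : Tcomp P r γ πs k 1 (v (k-1)) = Tpol P r γ (πs k) (v (k-1)) := rfl
        have hg := hgreedy (k-1)
        have e2 : k - 1 + 1 = k := by omega
        rw [e2] at hg
        rw [e1, hg]
        have e3 : vstar - Topt P r γ (v (k-1)) = Topt P r γ vstar - Topt P r γ (v (k-1)) := by
          rw [hstar]
        rw [e3]
        simpa using topt_contract P r γ hP hγ vstar (v (k-1))
      · have htk' : t ≤ k := by omega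
        rw [tcomp_peel]
        have hg := hgreedy (k - (t+1))
        have idx : k - (t+1) + 1 = k - t := by omega
        rw [idx] at hg
        have hA := hAVI (k - (t+1))
        rw [idx] at hA
        have e4 : Tpol P r γ (πs (k - t)) (v (k - (t+1))) = v (k-t) - εf (k-t) := by
          rw [hg]; exact eq_sub_of_add_eq hA.symm
        rw [e4]
        have tri : vstar - Tcomp P r γ πs k t (v (k-t) - εf (k-t))
            = (vstar - Tcomp P r γ πs k t (v (k-t)))
              + (Tcomp P r γ πs k t (v (k-t)) - Tcomp P r γ πs k t (v (k-t) - εf (k-t))) := by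
          abel
        have herr' : ‖εf (k-t)‖ ≤ ε := herr (k-t) (by omega)
        calc ‖vstar - Tcomp P r γ πs k t (v (k-t) - εf (k-t))‖
            ≤ ‖vstar - Tcomp P r γ πs k t (v (k-t))‖
              + ‖Tcomp P r γ πs k t (v (k-t)) - Tcomp P r γ πs k t (v (k-t) - εf (k-t))‖ := by
              rw [tri]; exact norm_add_le _ _
          _ ≤ (γ * ‖vstar - v (k-1)‖ + (∑ j ∈ Finset.Ico 1 t, γ ^ j) * ε)
              + γ ^ t * ‖v (k-t) - (v (k-t) - εf (k-t))‖ :=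
              add_le_add (ih ht1 htk') (tcomp_contract P r γ hP hγ πs t k _ _)
          _ ≤ (γ * ‖vstar - v (k-1)‖ + (∑ j ∈ Finset.Ico 1 t, γ ^ j) * ε) + γ ^ t * ε := by
              have e5 : v (k-t) - (v (k-t) - εf (k-t)) = εf (k-t) := by abel
              rw [e5]
              have : γ ^ t * ‖εf (k-t)‖ ≤ γ ^ t * ε :=
                mul_le_mul_of_nonneg_left herr' (by positivity)
              linarith
          _ = γ * ‖vstar - v (k-1)‖ + (∑ j ∈ Finset.Ico 1 (t+1), γ ^ j) * ε := by
              rw [Finset.sum_Ico_succ_top ht1]; ring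
  -- fixed-point assembly
  set N := ‖vstar - vkm‖ with hNdef
  have split : vstar - vkm = (vstar - Tcomp P r γ πs k m (v (k-m)))
      + (Tcomp P r γ πs k m (v (k-m)) - Tcomp P r γ πs k m vkm) := by
    conv_lhs => rw [← hfix]
    abel
  have hN : N ≤ (γ * ‖vstar - v (k-1)‖ + (∑ j ∈ Finset.Ico 1 m, γ ^ j) * ε)
      + γ ^ m * (‖vstar - v (k-m)‖ + N) := by
    have t1 : N ≤ ‖vstar - Tcomp P r γ πs k m (v (k-m))‖
        + ‖Tcomp P r γ πs k m (v (k-m)) - Tcomp P r γ πs k m vkm‖ := by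
      rw [hNdef, split]; exact norm_add_le _ _
    have t2 := tcomp_contract P r γ hP hγ πs m k (v (k-m)) vkm
    have t3 : ‖v (k-m) - vkm‖ ≤ ‖vstar - v (k-m)‖ + N := by
      have e : v (k-m) - vkm = (v (k-m) - vstar) + (vstar - vkm) := by abel
      calc ‖v (k-m) - vkm‖ ≤ ‖v (k-m) - vstar‖ + ‖vstar - vkm‖ := by
            rw [e]; exact norm_add_le _ _
        _ = ‖vstar - v (k-m)‖ + N := by rw [norm_sub_rev]
    have t4 := hC m hm hk
    nlinarith [mul_le_mul_of_nonneg_left t3 hγm0]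
  -- geometric sums in closed form
  have Sk1 : ∑ i ∈ range (k-1), γ ^ i = (1 - γ ^ (k-1)) / (1 - γ) := by
    rw [geom_sum_eq hγ1.ne]
    rw [div_eq_div_iff (by linarith) h1γ.ne']; ring
  have Skm : ∑ i ∈ range (k-m), γ ^ i = (1 - γ ^ (k-m)) / (1 - γ) := by
    rw [geom_sum_eq hγ1.ne]
    rw [div_eq_div_iff (by linarith) h1γ.ne']; ring
  have Sico : ∑ j ∈ Finset.Ico 1 m, γ ^ j = (γ - γ ^ m) / (1 - γ) := by
    rw [geom_sum_Ico hγ1.ne hm]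
    rw [div_eq_div_iff (by linarith) h1γ.ne']; ring
  have e1 : γ * γ ^ (k-1) = γ ^ k := by
    rw [← pow_succ', Nat.sub_add_cancel hk1]
  have e2 : γ ^ m * γ ^ (k-m) = γ ^ k := by
    rw [← pow_add, Nat.add_sub_cancel' hk]
  have bound1 := hD (k-1)
  have bound2 := hD (k-m)
  have key : γ * (γ ^ (k-1) * D0 + (1 - γ ^ (k-1)) / (1-γ) * ε)
      + (γ - γ ^ m) / (1-γ) * ε
      + γ ^ m * (γ ^ (k-m) * D0 + (1 - γ ^ (k-m)) / (1-γ) * ε)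
      = 2 * ((γ - γ ^ k) / (1-γ) * ε + γ ^ k * D0) := by
    field_simp
    linear_combination ((1-γ) * D0 - ε) * e1 + ((1-γ) * D0 - ε) * e2
  have main : (1 - γ ^ m) * N ≤ 2 * ((γ - γ ^ k) / (1-γ) * ε + γ ^ k * D0) := by
    rw [Sk1] at bound1
    rw [Skm] at bound2
    rw [Sico] at hN
    nlinarith [mul_le_mul_of_nonneg_left bound1 hγ, mul_le_mul_of_nonneg_left bound2 hγm0]
  rw [div_mul_eq_mul_div, le_div_iff₀ (by linarith : (0:ℝ) < 1 - γ ^ m)]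
  linarith
end

section
/- One-step error propagation for API with growing period: if π_{k+1} is greedy w.r.t. v_k = v_{π_{k,k}} + ε_k with ‖ε_k‖_∞ ≤ ε, then ‖v_* − v_{π_{k+1,k+1}}‖_∞ ≤ γ ‖v_* − v_{π_{k,k}}‖_∞ + 2γε + 2γ^{k+1} V_max. -/
open Finset Filter

variable {S A : Type*} [Fintype S] [Nonempty S] [DecidableEq S] [Fintype A] [Nonempty A]

lemma sum_mul_sub (P : S → A → S → ℝ) (s : S) (a : A) (v w : S → ℝ) :
    ∑ s', P s a s' * (v s' - w s') = ∑ s', P s a s' * v s' - ∑ s', P s a s' * w s' := by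
  rw [← Finset.sum_sub_distrib]
  exact Finset.sum_congr rfl fun _ _ => mul_sub _ _ _

lemma sum_abs_le (P : S → A → S → ℝ) (hP : IsStochastic P) (s : S) (a : A) (u : S → ℝ) :
    |∑ s', P s a s' * u s'| ≤ ‖u‖ := by
  calc |∑ s', P s a s' * u s'| ≤ ∑ s', |P s a s' * u s'| := Finset.abs_sum_le_sum_abs _ _
    _ ≤ ∑ s', P s a s' * ‖u‖ := by
        apply Finset.sum_le_sum; intro i _
        rw [abs_mul, abs_of_nonneg (hP.1 s a i)]
        exact mul_le_mul_of_nonneg_left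
          (by simpa [Real.norm_eq_abs] using norm_le_pi_norm u i) (hP.1 s a i)
    _ = ‖u‖ := by rw [← Finset.sum_mul, hP.2 s a, one_mul]

lemma Tpol_sub (P : S → A → S → ℝ) (r : S → A → ℝ) (γ : ℝ) (π : S → A) (v w : S → ℝ) :
    Tpol P r γ π v - Tpol P r γ π w = γ • Pap P π (v - w) := by
  funext s
  simp only [Tpol, Pap, Pi.sub_apply, Pi.smul_apply, smul_eq_mul]
  rw [sum_mul_sub]
  ring

lemma Pap_norm (P : S → A → S → ℝ) (hP : IsStochastic P) (π : S → A) (v : S → ℝ) :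
    ‖Pap P π v‖ ≤ ‖v‖ := by
  rw [pi_norm_le_iff_of_nonneg (norm_nonneg v)]
  intro s
  simpa [Pap, Real.norm_eq_abs] using sum_abs_le P hP s (π s) v

lemma Topt_contraction (P : S → A → S → ℝ) (r : S → A → ℝ) (γ : ℝ) (hγ : 0 ≤ γ)
    (hP : IsStochastic P) (v w : S → ℝ) :
    ‖Topt P r γ v - Topt P r γ w‖ ≤ γ * ‖v - w‖ := by
  rw [pi_norm_le_iff_of_nonneg (by positivity)]
  intro s
  simp only [Topt, Pi.sub_apply, Real.norm_eq_abs]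
  have key : ∀ a : A, |(r s a + γ * ∑ s', P s a s' * v s')
      - (r s a + γ * ∑ s', P s a s' * w s')| ≤ γ * ‖v - w‖ := by
    intro a
    have h1 : (r s a + γ * ∑ s', P s a s' * v s') - (r s a + γ * ∑ s', P s a s' * w s')
        = γ * ∑ s', P s a s' * ((v - w) s') := by
      simp only [Pi.sub_apply]; rw [sum_mul_sub]; ring
    rw [h1, abs_mul, abs_of_nonneg hγ]
    exact mul_le_mul_of_nonneg_left (sum_abs_le P hP s a (v - w)) hγ
  rw [abs_sub_le_iff]
  constructor <;> rw [sub_le_iff_le_add] <;> apply Finset.sup'_le <;> intro a _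
  · have h := (abs_sub_le_iff.mp (key a)).1
    have h2 := Finset.le_sup' (f := fun a => r s a + γ * ∑ s', P s a s' * w s')
      (b := a) (Finset.mem_univ a)
    linarith
  · have h := (abs_sub_le_iff.mp (key a)).2
    have h2 := Finset.le_sup' (f := fun a => r s a + γ * ∑ s', P s a s' * v s')
      (b := a) (Finset.mem_univ a)
    linarith

lemma Tcomp_sub (P : S → A → S → ℝ) (r : S → A → ℝ) (γ : ℝ) (πs : ℕ → S → A) :
    ∀ (m k : ℕ) (v w : S → ℝ),
      Tcomp P r γ πs k m v - Tcomp P r γ πs k m w = Gap P γ πs k m (v - w)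
  | 0, k, v, w => rfl
  | m+1, k, v, w => by
    show Tpol P r γ (πs k) _ - Tpol P r γ (πs k) _ = γ • Pap P (πs k) _
    rw [Tpol_sub, Tcomp_sub P r γ πs m (k-1) v w]

lemma Gap_norm (P : S → A → S → ℝ) (hP : IsStochastic P) (γ : ℝ) (hγ : 0 ≤ γ)
    (πs : ℕ → S → A) :
    ∀ (m k : ℕ) (u : S → ℝ), ‖Gap P γ πs k m u‖ ≤ γ ^ m * ‖u‖
  | 0, k, u => by simp [Gap]
  | m+1, k, u => by
    show ‖γ • Pap P (πs k) (Gap P γ πs (k-1) m u)‖ ≤ _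
    rw [norm_smul, Real.norm_eq_abs, abs_of_nonneg hγ]
    calc γ * ‖Pap P (πs k) (Gap P γ πs (k-1) m u)‖
        ≤ γ * (γ ^ m * ‖u‖) := by
          apply mul_le_mul_of_nonneg_left _ hγ
          exact le_trans (Pap_norm P hP _ _) (Gap_norm P hP γ hγ πs m (k-1) u)
      _ = γ ^ (m+1) * ‖u‖ := by ring

/-- One-step error propagation for API with growing period:
`‖v_* − v_{π_{k+1,k+1}}‖ ≤ γ ‖v_* − v_{π_{k,k}}‖ + 2γε + 2γ^{k+1} V_max`. -/
theorem api_growing_period_one_step (P : S → A → S → ℝ) (r : S → A → ℝ) (γ : ℝ)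
    (hP : IsStochastic P) (hγ0 : 0 < γ) (hγ1 : γ < 1)
    (Rmax Vmax ε : ℝ) (hr : ∀ s a, |r s a| ≤ Rmax) (hV : Vmax = Rmax / (1 - γ))
    (πs : ℕ → S → A) (vkk : ℕ → S → ℝ) (εf : ℕ → S → ℝ)
    (hfix : ∀ k : ℕ, 1 ≤ k → Tcomp P r γ πs k k (vkk k) = vkk k)
    (hgreedy : ∀ k : ℕ, 1 ≤ k →
      Tpol P r γ (πs (k+1)) (vkk k + εf k) = Topt P r γ (vkk k + εf k))
    (herr : ∀ k : ℕ, ‖εf k‖ ≤ ε) (hε : 0 ≤ ε)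
    (hvb : ∀ k : ℕ, 1 ≤ k → ‖vkk k‖ ≤ Vmax)
    (vstar : S → ℝ) (hstar : Topt P r γ vstar = vstar) (hstarb : ‖vstar‖ ≤ Vmax) :
    ∀ k : ℕ, 1 ≤ k →
      ‖vstar - vkk (k+1)‖ ≤ γ * ‖vstar - vkk k‖ + 2 * γ * ε + 2 * γ ^ (k+1) * Vmax := by
  intro k hk
  have hγ : (0:ℝ) ≤ γ := le_of_lt hγ0
  set δ : S → ℝ := Gap P γ πs k k (vkk (k+1) - vkk k) with hδ
  -- vkk (k+1) = T_{π_{k+1}} (vkk k + δ)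
  have hTc : Tcomp P r γ πs k k (vkk (k+1)) = vkk k + δ := by
    have h := Tcomp_sub P r γ πs k k (vkk (k+1)) (vkk k)
    rw [hfix k hk] at h
    rw [← hδ] at h
    rw [sub_eq_iff_eq_add] at h
    rw [h]; abel
  have hstep : vkk (k+1) = Tpol P r γ (πs (k+1)) (vkk k + δ) := by
    have h := hfix (k+1) (by omega)
    rw [show Tcomp P r γ πs (k+1) (k+1) (vkk (k+1))
        = Tpol P r γ (πs (k+1)) (Tcomp P r γ πs k k (vkk (k+1))) from rfl, hTc] at h
    exact h.symm
  -- decomposition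
  have key : vstar - vkk (k+1) = (Topt P r γ vstar - Topt P r γ (vkk k + εf k))
      + γ • Pap P (πs (k+1)) (εf k - δ) := by
    have h2 : Tpol P r γ (πs (k+1)) (vkk k + εf k) - Tpol P r γ (πs (k+1)) (vkk k + δ)
        = γ • Pap P (πs (k+1)) (εf k - δ) := by
      rw [Tpol_sub]; congr 1; abel
    rw [← h2, hgreedy k hk, hstar, ← hstep]; abel
  -- bounds
  have hδb : ‖δ‖ ≤ γ ^ k * (2 * Vmax) := by
    calc ‖δ‖ ≤ γ ^ k * ‖vkk (k+1) - vkk k‖ := Gap_norm P hP γ hγ πs k k _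
      _ ≤ γ ^ k * (2 * Vmax) := by
          apply mul_le_mul_of_nonneg_left _ (by positivity)
          calc ‖vkk (k+1) - vkk k‖ ≤ ‖vkk (k+1)‖ + ‖vkk k‖ := norm_sub_le _ _
            _ ≤ 2 * Vmax := by
                have := hvb k hk; have := hvb (k+1) (by omega); linarith
  have h1 : ‖Topt P r γ vstar - Topt P r γ (vkk k + εf k)‖
      ≤ γ * (‖vstar - vkk k‖ + ε) := by
    calc ‖Topt P r γ vstar - Topt P r γ (vkk k + εf k)‖
        ≤ γ * ‖vstar - (vkk k + εf k)‖ := Topt_contraction P r γ hγ hP _ _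
      _ ≤ γ * (‖vstar - vkk k‖ + ε) := by
          apply mul_le_mul_of_nonneg_left _ hγ
          calc ‖vstar - (vkk k + εf k)‖ = ‖(vstar - vkk k) - εf k‖ := by congr 1; abel
            _ ≤ ‖vstar - vkk k‖ + ‖εf k‖ := norm_sub_le _ _
            _ ≤ ‖vstar - vkk k‖ + ε := by linarith [herr k]
  have h2 : ‖γ • Pap P (πs (k+1)) (εf k - δ)‖ ≤ γ * (ε + γ ^ k * (2 * Vmax)) := by
    rw [norm_smul, Real.norm_eq_abs, abs_of_nonneg hγ]
    apply mul_le_mul_of_nonneg_left _ hγ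
    calc ‖Pap P (πs (k+1)) (εf k - δ)‖ ≤ ‖εf k - δ‖ := Pap_norm P hP _ _
      _ ≤ ‖εf k‖ + ‖δ‖ := norm_sub_le _ _
      _ ≤ ε + γ ^ k * (2 * Vmax) := add_le_add (herr k) hδb
  calc ‖vstar - vkk (k+1)‖
      ≤ ‖Topt P r γ vstar - Topt P r γ (vkk k + εf k)‖
        + ‖γ • Pap P (πs (k+1)) (εf k - δ)‖ := by rw [key]; exact norm_add_le _ _
    _ ≤ γ * (‖vstar - vkk k‖ + ε) + γ * (ε + γ ^ k * (2 * Vmax)) := add_le_add h1 h2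
    _ = γ * ‖vstar - vkk k‖ + 2 * γ * ε + 2 * γ ^ (k+1) * Vmax := by ring
end

section
/- Fixed-period API performance bound: for all m ≥ 1 and all k ≥ m, ‖v_* − v_{π_{k,m}}‖_∞ ≤ γ^{k−m} ‖v_* − v_{π_{m,m}}‖_∞ + (2(γ − γ^{k+1−m}) / ((1 − γ)(1 − γ^m))) ε. -/
open Finset Filter

variable {S A : Type*} [Fintype S] [Nonempty S] [DecidableEq S] [Fintype A] [Nonempty A]

set_option linter.unusedSectionVars false
set_option linter.unusedVariables false

section AuxAPI

variable {P : S → A → S → ℝ} {r : S → A → ℝ} {γ : ℝ}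

lemma sumP_le (hP : IsStochastic P) {u : S → ℝ} {c : ℝ} (h : ∀ s, u s ≤ c)
    (s : S) (a : A) : ∑ s', P s a s' * u s' ≤ c := by
  calc ∑ s', P s a s' * u s' ≤ ∑ s', P s a s' * c :=
        Finset.sum_le_sum fun s' _ => mul_le_mul_of_nonneg_left (h s') (hP.1 _ _ _)
    _ = c := by rw [← Finset.sum_mul, hP.2, one_mul]

lemma Tpol_mono (hP : IsStochastic P) (hγ0 : 0 ≤ γ) (π : S → A) {u v : S → ℝ}
    (h : ∀ s, u s ≤ v s) : ∀ s, Tpol P r γ π u s ≤ Tpol P r γ π v s := by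
  intro s
  refine add_le_add_right (mul_le_mul_of_nonneg_left ?_ hγ0) _
  exact Finset.sum_le_sum fun s' _ => mul_le_mul_of_nonneg_left (h s') (hP.1 _ _ _)

lemma Tpol_add (π : S → A) (v z : S → ℝ) (s : S) :
    Tpol P r γ π (v + z) s = Tpol P r γ π v s + γ * ∑ s', P s (π s) s' * z s' := by
  simp only [Tpol, Pi.add_apply, mul_add, Finset.sum_add_distrib]
  ring

lemma Tpol_add_const (hP : IsStochastic P) (π : S → A) (v : S → ℝ) (c : ℝ) (s : S) :
    Tpol P r γ π (v + fun _ => c) s = Tpol P r γ π v s + γ * c := by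
  rw [Tpol_add]
  congr 2
  rw [← Finset.sum_mul, hP.2, one_mul]

lemma Tpol_le_Topt (π : S → A) (v : S → ℝ) (s : S) :
    Tpol P r γ π v s ≤ Topt P r γ v s :=
  Finset.le_sup' (fun a => r s a + γ * ∑ s', P s a s' * v s') (Finset.mem_univ (π s))

lemma Topt_mono (hP : IsStochastic P) (hγ0 : 0 ≤ γ) {u v : S → ℝ}
    (h : ∀ s, u s ≤ v s) : ∀ s, Topt P r γ u s ≤ Topt P r γ v s := by
  intro s
  apply Finset.sup'_le
  intro a _
  refine le_trans ?_ (Finset.le_sup' _ (Finset.mem_univ a))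
  refine add_le_add_right (mul_le_mul_of_nonneg_left ?_ hγ0) _
  exact Finset.sum_le_sum fun s' _ => mul_le_mul_of_nonneg_left (h s') (hP.1 _ _ _)

lemma Topt_add_const_le (hP : IsStochastic P) (v : S → ℝ) (c : ℝ) (s : S) :
    Topt P r γ (v + fun _ => c) s ≤ Topt P r γ v s + γ * c := by
  apply Finset.sup'_le
  intro a _
  have h : r s a + γ * ∑ s', P s a s' * ((v + fun _ => c) : S → ℝ) s'
      = (r s a + γ * ∑ s', P s a s' * v s') + γ * c := by
    simp only [Pi.add_apply, mul_add, Finset.sum_add_distrib]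
    rw [← Finset.sum_mul, hP.2, one_mul]
    ring
  rw [h]
  exact add_le_add_left (Finset.le_sup' (fun a => r s a + γ * ∑ s', P s a s' * v s') (Finset.mem_univ a)) _

lemma Topt_exists_pol (v : S → ℝ) : ∃ π : S → A, ∀ s, Tpol P r γ π v s = Topt P r γ v s := by
  have h : ∀ s : S, ∃ a : A, Topt P r γ v s = r s a + γ * ∑ s', P s a s' * v s' := by
    intro s
    obtain ⟨a, _, ha⟩ := Finset.exists_mem_eq_sup' (univ_nonempty (α := A))
      (fun a => r s a + γ * ∑ s', P s a s' * v s')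
    exact ⟨a, ha⟩
  choose π hπ using h
  exact ⟨π, fun s => (hπ s).symm⟩

lemma Gap_mono (hP : IsStochastic P) (hγ0 : 0 ≤ γ) (πs : ℕ → S → A) :
    ∀ (n k : ℕ) {u v : S → ℝ}, (∀ s, u s ≤ v s) →
      ∀ s, Gap P γ πs k n u s ≤ Gap P γ πs k n v s := by
  intro n
  induction n with
  | zero => intro k u v h s; simpa [Gap] using h s
  | succ n ih =>
    intro k u v h s
    simp only [Gap, Pi.smul_apply, smul_eq_mul, Pap]
    refine mul_le_mul_of_nonneg_left ?_ hγ0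
    exact Finset.sum_le_sum fun s' _ => mul_le_mul_of_nonneg_left (ih (k-1) h s') (hP.1 _ _ _)

lemma Gap_const (hP : IsStochastic P) (πs : ℕ → S → A) (c : ℝ) :
    ∀ (n k : ℕ) (s : S), Gap P γ πs k n (fun _ => c) s = γ ^ n * c := by
  intro n
  induction n with
  | zero => intro k s; simp [Gap]
  | succ n ih =>
    intro k s
    simp only [Gap, Pi.smul_apply, smul_eq_mul, Pap]
    have : ∀ s', Gap P γ πs (k-1) n (fun _ => c) s' = γ ^ n * c := ih (k-1)
    rw [Finset.sum_congr rfl fun s' _ => by rw [this s']]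
    rw [← Finset.sum_mul, hP.2, one_mul]
    ring

lemma Tcomp_affine (πs : ℕ → S → A) :
    ∀ (n k : ℕ) (u v : S → ℝ) (s : S),
      Tcomp P r γ πs k n u s = Tcomp P r γ πs k n v s + Gap P γ πs k n (u - v) s := by
  intro n
  induction n with
  | zero => intro k u v s; simp [Tcomp, Gap]
  | succ n ih =>
    intro k u v s
    show Tpol P r γ (πs k) (Tcomp P r γ πs (k-1) n u) s = _
    have hu : Tcomp P r γ πs (k-1) n u
        = Tcomp P r γ πs (k-1) n v + Gap P γ πs (k-1) n (u - v) := by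
      funext s'; exact ih (k-1) u v s'
    rw [hu, Tpol_add]
    rfl

lemma Tcomp_succ_right (πs : ℕ → S → A) :
    ∀ (n k : ℕ) (v : S → ℝ),
      Tcomp P r γ πs k (n+1) v = Tcomp P r γ πs k n (Tpol P r γ (πs (k-n)) v) := by
  intro n
  induction n with
  | zero => intro k v; rfl
  | succ n ih =>
    intro k v
    show Tpol P r γ (πs k) (Tcomp P r γ πs (k-1) (n+1) v) = _
    rw [ih (k-1) v, Nat.sub_sub, Nat.add_comm 1 n]
    rfl

end AuxAPI

lemma api_step (P : S → A → S → ℝ) (r : S → A → ℝ) (γ : ℝ)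
    (hP : IsStochastic P) (hγ0 : 0 < γ) (hγ1 : γ < 1)
    (πs : ℕ → S → A) (m : ℕ) (hm : 1 ≤ m)
    (vkm : ℕ → S → ℝ) (εf : ℕ → S → ℝ) (ε : ℝ)
    (hfix : ∀ k : ℕ, m ≤ k → Tcomp P r γ πs k m (vkm k) = vkm k)
    (hgreedy : ∀ k : ℕ, m ≤ k →
      Tpol P r γ (πs (k+1)) (vkm k + εf k) = Topt P r γ (vkm k + εf k))
    (herr : ∀ k : ℕ, ‖εf k‖ ≤ ε)
    (vstar : S → ℝ) (hstar : Topt P r γ vstar = vstar)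
    (hle : ∀ k : ℕ, m ≤ k → ∀ s, vkm k s ≤ vstar s)
    (k : ℕ) (hk : m ≤ k) :
    ‖vstar - vkm (k+1)‖ ≤ γ * ‖vstar - vkm k‖ + 2*γ*ε/(1-γ^m) := by
  have hγ0' : (0:ℝ) ≤ γ := hγ0.le
  have hγm1 : γ ^ m < 1 := pow_lt_one₀ hγ0' hγ1 (by omega)
  have h1m : (0:ℝ) < 1 - γ ^ m := by linarith
  have hε : 0 ≤ ε := le_trans (norm_nonneg _) (herr k)
  have hub : ∀ s, εf k s ≤ ε := by
    intro s
    have h1 := norm_le_pi_norm (εf k) s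
    rw [Real.norm_eq_abs] at h1
    have := le_abs_self (εf k s)
    linarith [herr k]
  have hlb : ∀ s, -ε ≤ εf k s := by
    intro s
    have h1 := norm_le_pi_norm (εf k) s
    rw [Real.norm_eq_abs] at h1
    have := neg_abs_le (εf k s)
    linarith [herr k]
  obtain ⟨πst, hπst⟩ := Topt_exists_pol (P := P) (r := r) (γ := γ) vstar
  -- greedy step bound
  have hB : ∀ s, Topt P r γ (vkm k) s ≤ Tpol P r γ (πs (k+1)) (vkm k) s + 2*(γ*ε) := by
    intro s
    have h1 : ∀ s', vkm k s' ≤ ((vkm k + εf k) + fun _ => ε : S → ℝ) s' := by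
      intro s'
      simp only [Pi.add_apply]
      linarith [hlb s']
    have h2 := Topt_mono (r := r) hP hγ0' h1 s
    have h3 := Topt_add_const_le (γ := γ) hP (r := r) (vkm k + εf k) ε s
    rw [← hgreedy k hk] at h3
    have h4 : ∀ s', (vkm k + εf k) s' ≤ ((vkm k) + fun _ => ε : S → ℝ) s' := by
      intro s'
      simp only [Pi.add_apply]
      linarith [hub s']
    have h5 := Tpol_mono (r := r) hP hγ0' (πs (k+1)) h4 s
    have h6 := Tpol_add_const (γ := γ) hP (r := r) (πs (k+1)) (vkm k) ε s
    rw [h6] at h5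
    nlinarith [hγ0', hε]
  have hA : ∀ s, vstar s ≤ Tpol P r γ (πs (k+1)) (vkm k) s + γ * ‖vstar - vkm k‖ + 2*(γ*ε) := by
    intro s
    have h0 : Tpol P r γ πst vstar s = vstar s := (hπst s).trans (congrFun hstar s)
    have hdec : Tpol P r γ πst vstar s
        = Tpol P r γ πst (vkm k) s + γ * ∑ s', P s (πst s) s' * (vstar - vkm k) s' := by
      have hv : vstar = vkm k + (vstar - vkm k) := by funext t; simp
      calc Tpol P r γ πst vstar s = Tpol P r γ πst (vkm k + (vstar - vkm k)) s := by rw [← hv]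
        _ = _ := Tpol_add πst (vkm k) (vstar - vkm k) s
    have hsum : ∑ s', P s (πst s) s' * (vstar - vkm k) s' ≤ ‖vstar - vkm k‖ := by
      refine sumP_le hP (fun s' => ?_) s (πst s)
      have h1 := norm_le_pi_norm (vstar - vkm k) s'
      rw [Real.norm_eq_abs] at h1
      exact le_trans (le_abs_self _) h1
    have h2 : Tpol P r γ πst (vkm k) s ≤ Topt P r γ (vkm k) s := Tpol_le_Topt πst (vkm k) s
    have h3 := hB s
    have h4 : γ * ∑ s', P s (πst s) s' * (vstar - vkm k) s' ≤ γ * ‖vstar - vkm k‖ :=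
      mul_le_mul_of_nonneg_left hsum hγ0'
    linarith
  -- identity for y
  have hid : Tpol P r γ (πs (k+1)) (vkm k)
      = Tcomp P r γ πs (k+1) m (Tpol P r γ (πs (k+1-m)) (vkm k)) := by
    conv_lhs => rw [← hfix k hk]
    have h1 : Tpol P r γ (πs (k+1)) (Tcomp P r γ πs k m (vkm k))
        = Tcomp P r γ πs (k+1) (m+1) (vkm k) := rfl
    rw [h1, Tcomp_succ_right πs m (k+1) (vkm k)]
  set y : S → ℝ := fun s => Tpol P r γ (πs (k+1)) (vkm k) s - vkm (k+1) s with hy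
  have hyGap : ∀ s, y s
      = Gap P γ πs (k+1) m (Tpol P r γ (πs (k+1-m)) (vkm k) - vkm (k+1)) s := by
    intro s
    have h1 : Tpol P r γ (πs (k+1)) (vkm k) s
        = Tcomp P r γ πs (k+1) m (vkm (k+1)) s
          + Gap P γ πs (k+1) m (Tpol P r γ (πs (k+1-m)) (vkm k) - vkm (k+1)) s := by
      rw [hid]
      exact Tcomp_affine πs m (k+1) _ _ s
    have h2 : Tcomp P r γ πs (k+1) m (vkm (k+1)) s = vkm (k+1) s :=
      congrFun (hfix (k+1) (by omega)) s
    simp only [hy]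
    linarith
  set M : ℝ := univ.sup' univ_nonempty y with hMdef
  have hM : ∀ s, y s ≤ M := fun s => Finset.le_sup' y (mem_univ s)
  have hz : ∀ s, (Tpol P r γ (πs (k+1-m)) (vkm k) - vkm (k+1)) s ≤ 2*(γ*ε) + M := by
    intro s
    have h1 : Tpol P r γ (πs (k+1-m)) (vkm k) s ≤ Topt P r γ (vkm k) s :=
      Tpol_le_Topt _ (vkm k) s
    have h2 := hB s
    have h3 := hM s
    simp only [hy] at h3
    simp only [Pi.sub_apply]
    linarith
  have hyle : ∀ s, y s ≤ γ^m * (2*(γ*ε) + M) := by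
    intro s
    rw [hyGap s]
    calc Gap P γ πs (k+1) m (Tpol P r γ (πs (k+1-m)) (vkm k) - vkm (k+1)) s
        ≤ Gap P γ πs (k+1) m (fun _ => 2*(γ*ε) + M) s := Gap_mono hP hγ0' πs m (k+1) hz s
      _ = γ^m * (2*(γ*ε) + M) := Gap_const hP πs _ m (k+1) s
  have hMle : M ≤ γ^m * (2*(γ*ε) + M) := by
    obtain ⟨s₀, _, hs₀⟩ := Finset.exists_mem_eq_sup' (univ_nonempty (α := S)) y
    have hMeq : M = y s₀ := hMdef.trans hs₀
    linarith [hyle s₀]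
  have hMbound : M ≤ 2*γ^m*(γ*ε)/(1-γ^m) := by
    rw [le_div_iff₀ h1m]
    nlinarith [hMle]
  have key : 2*(γ*ε) + 2*γ^m*(γ*ε)/(1-γ^m) = 2*γ*ε/(1-γ^m) := by
    field_simp
    ring
  have hfin : ∀ s, vstar s - vkm (k+1) s ≤ γ * ‖vstar - vkm k‖ + 2*γ*ε/(1-γ^m) := by
    intro s
    have h1 := hA s
    have h2 : y s = Tpol P r γ (πs (k+1)) (vkm k) s - vkm (k+1) s := rfl
    have h3 := hM s
    linarith [hMbound]
  have hrhs : 0 ≤ γ * ‖vstar - vkm k‖ + 2*γ*ε/(1-γ^m) :=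
    add_nonneg (mul_nonneg hγ0' (norm_nonneg _))
      (div_nonneg (by positivity) h1m.le)
  rw [pi_norm_le_iff_of_nonneg hrhs]
  intro s
  have hnn : 0 ≤ vstar s - vkm (k+1) s := sub_nonneg.2 (hle (k+1) (by omega) s)
  rw [Pi.sub_apply, Real.norm_eq_abs, abs_of_nonneg hnn]
  exact hfin s


/-- Fixed-period API performance bound: for all `k ≥ m`,
`‖v_* − v_{π_{k,m}}‖ ≤ γ^{k−m} ‖v_* − v_{π_{m,m}}‖ + 2(γ − γ^{k+1−m})/((1 − γ)(1 − γ^m)) ε`. -/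
theorem api_fixed_period_bound (P : S → A → S → ℝ) (r : S → A → ℝ) (γ : ℝ)
    (hP : IsStochastic P) (hγ0 : 0 < γ) (hγ1 : γ < 1)
    (πs : ℕ → S → A) (m : ℕ) (hm : 1 ≤ m)
    (vkm : ℕ → S → ℝ) (εf : ℕ → S → ℝ) (ε : ℝ) (hε : 0 ≤ ε)
    (hfix : ∀ k : ℕ, m ≤ k → Tcomp P r γ πs k m (vkm k) = vkm k)
    (hgreedy : ∀ k : ℕ, m ≤ k →
      Tpol P r γ (πs (k+1)) (vkm k + εf k) = Topt P r γ (vkm k + εf k))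
    (herr : ∀ k : ℕ, ‖εf k‖ ≤ ε)
    (vstar : S → ℝ) (hstar : Topt P r γ vstar = vstar)
    (hle : ∀ k : ℕ, m ≤ k → ∀ s, vkm k s ≤ vstar s) :
    ∀ k : ℕ, m ≤ k →
      ‖vstar - vkm k‖ ≤ γ ^ (k - m) * ‖vstar - vkm m‖
        + 2 * (γ - γ ^ (k + 1 - m)) / ((1 - γ) * (1 - γ ^ m)) * ε := by
  have hγ0' : (0:ℝ) ≤ γ := hγ0.le
  have hγm1 : γ ^ m < 1 := pow_lt_one₀ hγ0' hγ1 (by omega)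
  have h1m : (0:ℝ) < 1 - γ ^ m := by linarith
  have h1γ : (0:ℝ) < 1 - γ := by linarith
  intro k hk
  induction k, hk using Nat.le_induction with
  | base =>
    have e1 : m - m = 0 := by omega
    have e2 : m + 1 - m = 1 := by omega
    rw [e1, e2]
    simp
  | succ k hk ih =>
    have hstep := api_step P r γ hP hγ0 hγ1 πs m hm vkm εf ε hfix hgreedy herr
      vstar hstar hle k hk
    have e1 : k + 1 - m = (k - m) + 1 := by omega
    have e2 : k + 1 + 1 - m = (k - m) + 2 := by omega
    rw [e1] at ih
    rw [e2, e1]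
    set n := k - m with hn
    set E := ‖vstar - vkm m‖ with hE
    have heq : γ * (γ^n * E + 2*(γ - γ^(n+1))/((1-γ)*(1-γ^m))*ε) + 2*γ*ε/(1-γ^m)
        = γ^(n+1) * E + 2*(γ - γ^(n+2))/((1-γ)*(1-γ^m))*ε := by
      field_simp
      ring
    calc ‖vstar - vkm (k+1)‖ ≤ γ * ‖vstar - vkm k‖ + 2*γ*ε/(1-γ^m) := hstep
      _ ≤ γ * (γ^n * E + 2*(γ - γ^(n+1))/((1-γ)*(1-γ^m))*ε) + 2*γ*ε/(1-γ^m) := by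
          have := mul_le_mul_of_nonneg_left ih hγ0'
          linarith
      _ = γ^(n+1) * E + 2*(γ - γ^(n+2))/((1-γ)*(1-γ^m))*ε := heq
      _ = γ ^ (n+1) * E + 2 * (γ - γ ^ (n + 2)) / ((1 - γ) * (1 - γ ^ m)) * ε := by ring
end
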